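/- Every point of the standard simplex lies in a simplex of the barycentric subdivision: for every x ∈ Σ there exist m ≥ 1 and a strictly increasing chain of nonempty subsets g_1 ⊊ g_2 ⊊ ⋯ ⊊ g_m of {0,…,n} such that x belongs to the convex hull of the barycentres {ξ_{g_1}, …, ξ_{g_m}}. -/

import Mathlib

open Finset

noncomputable section

/-- The affine hyperplane `E = {t ∈ ℝ^{n+1} : ∑ tᵢ = 1}`. -/
def planeE (n : ℕ) : Set (Fin (n+1) → ℝ) := {t | ∑ i, t i = 1}

/-- The standard n-simplex `Σ = {t ∈ E : tᵢ ≥ 0 ∀ i}`. -/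
def simplexS (n : ℕ) : Set (Fin (n+1) → ℝ) := {t | ∑ i, t i = 1 ∧ ∀ i, 0 ≤ t i}

/-- `R_f = {t ∈ E : tᵢ ≥ 0 for i ∈ f, tᵢ ≤ 0 for i ∉ f}`. -/
def regionR (n : ℕ) (f : Finset (Fin (n+1))) : Set (Fin (n+1) → ℝ) :=
  {t | ∑ i, t i = 1 ∧ (∀ i ∈ f, 0 ≤ t i) ∧ ∀ i ∉ f, t i ≤ 0}

/-- `R_{≤f} = {t ∈ E : tᵢ ≤ 0 for i ∉ f}`. -/
def regionRle (n : ℕ) (f : Finset (Fin (n+1))) : Set (Fin (n+1) → ℝ) :=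
  {t | ∑ i, t i = 1 ∧ ∀ i ∉ f, t i ≤ 0}

/-- The face `|f| = {t ∈ Σ : tᵢ = 0 for i ∉ f}`. -/
def faceF (n : ℕ) (f : Finset (Fin (n+1))) : Set (Fin (n+1) → ℝ) :=
  {t | (∑ i, t i = 1 ∧ ∀ i, 0 ≤ t i) ∧ ∀ i ∉ f, t i = 0}

/-- `CR_f = {t ∈ Σ : tᵢ ≥ L for i ∈ f, tᵢ ≤ L for i ∉ f}`. -/
def regionCR (n : ℕ) (L : ℝ) (f : Finset (Fin (n+1))) : Set (Fin (n+1) → ℝ) :=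
  {t | (∑ i, t i = 1 ∧ ∀ i, 0 ≤ t i) ∧ (∀ i ∈ f, L ≤ t i) ∧ ∀ i ∉ f, t i ≤ L}

/-- The barycentre `ξ_f` of the face `|f|`. -/
def bary (n : ℕ) (f : Finset (Fin (n+1))) : Fin (n+1) → ℝ :=
  fun i => if i ∈ f then (f.card : ℝ)⁻¹ else 0

/-- The retraction `q : E → Σ`, `q(t) = [max(t₀,0),…,max(tₙ,0)]`. -/
def retr (n : ℕ) (t : Fin (n+1) → ℝ) : Fin (n+1) → ℝ :=
  fun i => (∑ j, max (t j) 0)⁻¹ * max (t i) 0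

/-- The collapsing map `C_Σ : Σ → Σ`, `C_Σ(t) = [min(t₀,L),…,min(tₙ,L)]`. -/
def collapse (n : ℕ) (L : ℝ) (t : Fin (n+1) → ℝ) : Fin (n+1) → ℝ :=
  fun i => (∑ j, min (t j) L)⁻¹ * min (t i) L

/-- The radial expansion `r_λ : E → E`. -/
def rexp (n : ℕ) (lam : ℝ) (t : Fin (n+1) → ℝ) : Fin (n+1) → ℝ :=
  fun i => lam * t i - (lam - 1) / ((n : ℝ) + 1)

/-- Every point of Σ lies in the convex hull of the barycentres of a strictly
increasing chain of nonempty subsets of {0,…,n}. -/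
theorem stmt17 (n : ℕ) (x : Fin (n+1) → ℝ) (hx : x ∈ simplexS n) :
    ∃ m : ℕ, 1 ≤ m ∧ ∃ g : Fin m → Finset (Fin (n+1)),
      (∀ j, (g j).Nonempty) ∧ StrictMono g ∧
      x ∈ convexHull ℝ (Set.range fun j => bary n (g j)) := by
  obtain ⟨hsum, hpos⟩ := hx
  set σ := Tuple.sort x with hσ
  set τ : Fin (n+1) → Fin (n+1) := fun i => σ (Fin.rev i) with hτ
  have hτinj : Function.Injective τ := fun a b h => Fin.rev_injective (σ.injective h)
  have hτsurj : Function.Surjective τ := fun b => ⟨Fin.rev (σ.symm b), by simp [hτ]⟩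
  have hanti : ∀ i j : Fin (n+1), i ≤ j → x (τ j) ≤ x (τ i) := by
    intro i j hij
    exact Tuple.monotone_sort x (Fin.rev_le_rev.mpr hij)
  set g : Fin (n+1) → Finset (Fin (n+1)) := fun j => (Finset.Iic j).image τ with hg
  have hcard : ∀ j, (g j).card = (j : ℕ) + 1 := by
    intro j
    rw [hg]
    rw [Finset.card_image_of_injective _ hτinj, Fin.card_Iic]
  have hmemg : ∀ (k j : Fin (n+1)), τ k ∈ g j ↔ k ≤ j := by
    intro k j
    simp only [hg, Finset.mem_image]
    constructor
    · rintro ⟨a, ha, hak⟩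
      rw [← hτinj hak]
      exact Finset.mem_Iic.mp ha
    · intro h
      exact ⟨k, Finset.mem_Iic.mpr h, rfl⟩
  set u : ℕ → ℝ := fun k => if h : k < n+1 then x (τ ⟨k, h⟩) else 0 with hu
  have hustep : ∀ k : ℕ, u (k+1) ≤ u k := by
    intro k
    rw [hu]
    by_cases h : k + 1 < n + 1
    · have h' : k < n + 1 := Nat.lt_of_succ_lt h
      simp only [h, h', dif_pos]
      exact hanti ⟨k, h'⟩ ⟨k+1, h⟩ (by simp [Fin.le_def])
    · show (if h : k+1 < n+1 then x (τ ⟨k+1,h⟩) else 0) ≤ if h : k < n+1 then x (τ ⟨k,h⟩) else 0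
      rw [dif_neg h]
      split
      · exact hpos _
      · exact le_refl _
  set w : Fin (n+1) → ℝ := fun j => ((j : ℕ) + 1 : ℝ) * (u j - u ((j : ℕ) + 1)) with hw
  have hw0 : ∀ j, 0 ≤ w j := by
    intro j
    apply mul_nonneg (by positivity)
    have := hustep (j : ℕ)
    linarith
  -- key identity
  have hkey : ∀ i, x i = ∑ j, w j • bary n (g j) i := by
    intro i
    obtain ⟨k, rfl⟩ := hτsurj i
    have hterm : ∀ j : Fin (n+1), w j • bary n (g j) (τ k) =
        if (k : ℕ) ≤ (j : ℕ) then u (j : ℕ) - u ((j : ℕ)+1) else 0 := by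
      intro j
      rw [bary]
      by_cases h : k ≤ j
      · rw [if_pos ((hmemg k j).mpr h), if_pos (Fin.le_def.mp h), hcard j, smul_eq_mul, hw]
        push_cast
        field_simp
      · rw [if_neg (fun hh => h ((hmemg k j).mp hh)), if_neg (fun hh => h (Fin.le_def.mpr hh))]
        simp
    rw [Finset.sum_congr rfl (fun j _ => hterm j)]
    rw [Fin.sum_univ_eq_sum_range (fun j => if (k:ℕ) ≤ j then u j - u (j+1) else 0)]
    rw [← Finset.sum_filter]
    have hfil : (Finset.range (n+1)).filter (fun j => (k:ℕ) ≤ j) = Finset.Ico (k:ℕ) (n+1) := by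
      ext a
      simp [Finset.mem_filter, Finset.mem_range, Finset.mem_Ico, and_comm]
    rw [hfil, Finset.sum_Ico_eq_sum_range]
    have htel : ∑ i ∈ Finset.range (n+1-(k:ℕ)), (u ((k:ℕ)+i) - u ((k:ℕ)+i+1))
        = u (k:ℕ) - u ((k:ℕ) + (n+1-(k:ℕ))) := by
      have := Finset.sum_range_sub' (fun i => u ((k:ℕ)+i)) (n+1-(k:ℕ))
      exact this
    have hklen : (k:ℕ) + (n+1-(k:ℕ)) = n+1 := by omega
    have hu0 : u (n+1) = 0 := by simp [hu]
    have huk : u (k:ℕ) = x (τ k) := by simp [hu, k.isLt, not_lt.mpr (Fin.is_le k)]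
    rw [htel, hklen, hu0, huk, sub_zero]
  -- sum of barycentre coordinates is 1
  have hbsum : ∀ j : Fin (n+1), ∑ i, bary n (g j) i = 1 := by
    intro j
    have hc : ((g j).card : ℝ) ≠ 0 := by rw [hcard]; positivity
    simp only [bary]
    rw [Finset.sum_ite_mem, Finset.univ_inter, Finset.sum_const, nsmul_eq_mul]
    field_simp
  -- weights sum to one
  have hwsum : ∑ j, w j = 1 := by
    have : (1 : ℝ) = ∑ i, ∑ j, w j • bary n (g j) i := by
      rw [← hsum]
      exact Finset.sum_congr rfl fun i _ => hkey i
    rw [Finset.sum_comm] at this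
    rw [this]
    refine Finset.sum_congr rfl fun j _ => ?_
    simp only [smul_eq_mul, ← Finset.mul_sum, hbsum j, mul_one]
  refine ⟨n+1, Nat.le_add_left 1 n, g, ?_, ?_, ?_⟩
  · intro j
    rw [← Finset.card_pos, hcard]
    omega
  · intro j k hjk
    have hsub : g j ⊆ g k := Finset.image_subset_image (Finset.Iic_subset_Iic.mpr hjk.le)
    have hclt : (g j).card < (g k).card := by
      rw [hcard, hcard]
      exact Nat.add_lt_add_right hjk 1
    exact lt_of_le_of_ne hsub (fun h => by rw [h] at hclt; exact lt_irrefl _ hclt)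
  · have hx_eq : x = Finset.univ.centerMass w (fun j => bary n (g j)) := by
      rw [Finset.centerMass_eq_of_sum_1 _ _ hwsum]
      funext i
      rw [hkey i]
      simp [Finset.sum_apply]
    rw [hx_eq]
    exact Finset.centerMass_mem_convexHull _ (fun j _ => hw0 j) (by rw [hwsum]; norm_num)
      (fun j _ => ⟨j, rfl⟩)
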